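/- The cover pebbling number of the d-dimensional hypercube Q^d equals 3^d, for every positive integer d. -/

import Mathlib

open Finset

/-- A pebbling step on graph `G`: remove two pebbles from a vertex `u`,
place one pebble on an adjacent vertex `v`. -/
def PebbleStep {V : Type*} (G : SimpleGraph V) (C C' : V → ℕ) : Prop :=
  ∃ u v : V, G.Adj u v ∧ 2 ≤ C u ∧ C' u = C u - 2 ∧ C' v = C v + 1 ∧
    ∀ x : V, x ≠ u → x ≠ v → C' x = C x

/-- A configuration is coverable if after some sequence of pebbling steps
every vertex has at least one pebble. -/
def Coverable {V : Type*} (G : SimpleGraph V) (C : V → ℕ) : Prop :=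
  ∃ C' : V → ℕ, Relation.ReflTransGen (PebbleStep G) C C' ∧ ∀ v : V, 1 ≤ C' v

/-- The `d`-dimensional hypercube: vertices are binary `d`-tuples, adjacent
exactly when they differ in one coordinate. -/
def cube (d : ℕ) : SimpleGraph (Fin d → Bool) where
  Adj x y := hammingDist x y = 1
  symm := ⟨fun x y (h : hammingDist x y = 1) => by show hammingDist y x = 1; rw [hammingDist_comm]; exact h⟩
  loopless := ⟨fun x h => by simp [hammingDist_self] at h⟩

/-! ### Auxiliary lemmas -/

lemma hammingDist_cons {d : ℕ} (a b : Bool) (x y : Fin d → Bool) :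
    hammingDist (Fin.cons a x : Fin (d+1) → Bool) (Fin.cons b y)
      = (if a = b then 0 else 1) + hammingDist x y := by
  unfold hammingDist
  rw [Finset.card_filter, Finset.card_filter, Fin.sum_univ_succ]
  simp only [Fin.cons_zero, Fin.cons_succ]
  by_cases h : a = b <;> simp [h]

lemma sum_split {d : ℕ} (F : (Fin (d+1) → Bool) → ℕ) :
    ∑ x, F x = (∑ y, F (Fin.cons false y)) + ∑ y, F (Fin.cons true y) := by
  rw [← Fintype.sum_equiv (Fin.consEquiv (fun _ : Fin (d+1) => Bool))
      (fun p => F (Fin.cons p.1 p.2)) F (fun p => rfl)]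
  rw [Fintype.sum_prod_type, Fintype.sum_bool]
  ring

lemma cube_adj_cons {d : ℕ} (b : Bool) {x y : Fin d → Bool} (h : (cube d).Adj x y) :
    (cube (d+1)).Adj (Fin.cons b x) (Fin.cons b y) := by
  show hammingDist _ _ = 1
  rw [hammingDist_cons]
  rw [if_pos rfl, zero_add]
  exact h

lemma cube_adj_cross {d : ℕ} (b : Bool) (y : Fin d → Bool) :
    (cube (d+1)).Adj (Fin.cons b y) (Fin.cons (!b) y) := by
  show hammingDist _ _ = 1
  rw [hammingDist_cons]
  simp [hammingDist_self]

/-- lift a pebbling sequence on `Q^d` to one side of `Q^(d+1)` -/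
lemma lift_rtg {d : ℕ} (b : Bool) {C C' : (Fin d → Bool) → ℕ}
    (h : Relation.ReflTransGen (PebbleStep (cube d)) C C') (D : (Fin (d+1) → Bool) → ℕ) :
    Relation.ReflTransGen (PebbleStep (cube (d+1)))
      (fun w => if w 0 = b then C (Fin.tail w) else D w)
      (fun w => if w 0 = b then C' (Fin.tail w) else D w) := by
  induction h with
  | refl => exact Relation.ReflTransGen.refl
  | tail _ hstep ih =>
    refine ih.tail ?_
    obtain ⟨u, v, hadj, h2, hu, hv, hx⟩ := hstep
    refine ⟨Fin.cons b u, Fin.cons b v, cube_adj_cons b hadj, ?_, ?_, ?_, ?_⟩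
    · simpa using h2
    · simpa using hu
    · simpa using hv
    · intro x hxu hxv
      by_cases hb : x 0 = b
      · simp only [hb, if_pos rfl]
        refine hx _ (fun he => hxu ?_) (fun he => hxv ?_)
        · rw [← Fin.cons_self_tail x, hb, he]
        · rw [← Fin.cons_self_tail x, hb, he]
      · simp [hb]

lemma exists_two {d : ℕ} (b : Bool) (C : (Fin (d+1) → Bool) → ℕ)
    (h : 2^d + 1 ≤ ∑ y : Fin d → Bool, C (Fin.cons b y)) :
    ∃ y : Fin d → Bool, 2 ≤ C (Fin.cons b y) := by
  by_contra hc
  push_neg at hc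
  have : ∑ y : Fin d → Bool, C (Fin.cons b y) ≤ ∑ _y : Fin d → Bool, 1 :=
    Finset.sum_le_sum fun y _ => Nat.lt_succ_iff.mp (hc y)
  simp only [Finset.sum_const, smul_eq_mul, mul_one, Finset.card_univ, Fintype.card_fun,
    Fintype.card_bool, Fintype.card_fin] at this
  omega

lemma cons_ne_cons {d : ℕ} {a b : Bool} (h : a ≠ b) (y z : Fin d → Bool) :
    (Fin.cons a y : Fin (d+1) → Bool) ≠ Fin.cons b z := by
  intro he
  exact h (by simpa using congrFun he 0)

lemma cons_inj' {d : ℕ} {a : Bool} {y z : Fin d → Bool}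
    (h : (Fin.cons a y : Fin (d+1) → Bool) = Fin.cons a z) : y = z := by
  have := congrArg Fin.tail h
  simpa [Fin.tail_cons] using this

lemma sum_cons_update {d : ℕ} (b : Bool) (C : (Fin (d+1) → Bool) → ℕ) (y : Fin d → Bool) (n : ℕ)
    (C1 : (Fin (d+1) → Bool) → ℕ) (hy : C1 (Fin.cons b y) = n)
    (hother : ∀ z : Fin d → Bool, z ≠ y → C1 (Fin.cons b z) = C (Fin.cons b z)) :
    ∑ z : Fin d → Bool, C1 (Fin.cons b z)
      = n + ((∑ z : Fin d → Bool, C (Fin.cons b z)) - C (Fin.cons b y)) := by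
  have key : ∀ z : Fin d → Bool,
      C1 (Fin.cons b z) = Function.update (fun w : Fin d → Bool => C (Fin.cons b w)) y n z := by
    intro z
    by_cases hz : z = y
    · subst hz; rw [Function.update_self]; exact hy
    · rw [Function.update_of_ne hz]; exact hother z hz
  rw [Finset.sum_congr rfl fun z _ => key z, Finset.sum_update_of_mem (Finset.mem_univ y)]
  have h2 : ∑ z : Fin d → Bool, C (Fin.cons b z)
      = C (Fin.cons b y) + ∑ z ∈ Finset.univ \ {y}, C (Fin.cons b z) := by
    rw [← Finset.sum_compl_add_sum {y}]
    simp [Finset.compl_eq_univ_sdiff, add_comm]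
  omega

lemma moveLemma {d : ℕ} (b : Bool) (t : ℕ) :
    ∀ C : (Fin (d+1) → Bool) → ℕ, 2*t + (2^d - 1) ≤ ∑ y : Fin d → Bool, C (Fin.cons b y) →
    ∃ C', Relation.ReflTransGen (PebbleStep (cube (d+1))) C C' ∧
      (∑ y : Fin d → Bool, C' (Fin.cons b y)) + 2*t = ∑ y : Fin d → Bool, C (Fin.cons b y) ∧
      (∑ y : Fin d → Bool, C' (Fin.cons (!b) y))
        = (∑ y : Fin d → Bool, C (Fin.cons (!b) y)) + t := by
  induction t with
  | zero => intro C _; exact ⟨C, Relation.ReflTransGen.refl, by omega, by omega⟩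
  | succ t ih =>
    intro C hC
    have hpow : 1 ≤ 2^d := Nat.one_le_two_pow
    obtain ⟨y, hy⟩ := exists_two b C (by omega)
    have huv : (Fin.cons b y : Fin (d+1) → Bool) ≠ Fin.cons (!b) y :=
      cons_ne_cons (by simp) y y
    set C1 : (Fin (d+1) → Bool) → ℕ :=
      fun x => if x = Fin.cons b y then C x - 2 else if x = Fin.cons (!b) y then C x + 1 else C x
      with hC1
    have e1 : C1 (Fin.cons b y) = C (Fin.cons b y) - 2 := by simp [hC1]
    have e2 : C1 (Fin.cons (!b) y) = C (Fin.cons (!b) y) + 1 := by simp [hC1, huv.symm]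
    have hstep : PebbleStep (cube (d+1)) C C1 := by
      refine ⟨Fin.cons b y, Fin.cons (!b) y, cube_adj_cross b y, hy, e1, e2, ?_⟩
      intro x hxu hxv
      simp [hC1, hxu, hxv]
    have hb1 : ∑ z : Fin d → Bool, C1 (Fin.cons b z)
        = (C (Fin.cons b y) - 2)
          + ((∑ z : Fin d → Bool, C (Fin.cons b z)) - C (Fin.cons b y)) := by
      refine sum_cons_update b C y _ C1 e1 ?_
      intro z hz
      have h1 : (Fin.cons b z : Fin (d+1) → Bool) ≠ Fin.cons b y := fun he => hz (cons_inj' he)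
      have h2 : (Fin.cons b z : Fin (d+1) → Bool) ≠ Fin.cons (!b) y := cons_ne_cons (by simp) z y
      simp [hC1, h1, h2]
    have hnb1 : ∑ z : Fin d → Bool, C1 (Fin.cons (!b) z)
        = (C (Fin.cons (!b) y) + 1)
          + ((∑ z : Fin d → Bool, C (Fin.cons (!b) z)) - C (Fin.cons (!b) y)) := by
      refine sum_cons_update (!b) C y _ C1 e2 ?_
      intro z hz
      have h1 : (Fin.cons (!b) z : Fin (d+1) → Bool) ≠ Fin.cons b y := cons_ne_cons (by simp) z y
      have h2 : (Fin.cons (!b) z : Fin (d+1) → Bool) ≠ Fin.cons (!b) y :=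
        fun he => hz (cons_inj' he)
      simp [hC1, h1, h2]
    have hle : C (Fin.cons b y) ≤ ∑ z : Fin d → Bool, C (Fin.cons b z) :=
      Finset.single_le_sum (f := fun z => C (Fin.cons b z)) (fun z _ => Nat.zero_le _)
        (Finset.mem_univ y)
    have hle' : C (Fin.cons (!b) y) ≤ ∑ z : Fin d → Bool, C (Fin.cons (!b) z) :=
      Finset.single_le_sum (f := fun z => C (Fin.cons (!b) z)) (fun z _ => Nat.zero_le _)
        (Finset.mem_univ y)
    obtain ⟨C', hrtg, hb2, hnb2⟩ := ih C1 (by omega)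
    exact ⟨C', Relation.ReflTransGen.head hstep hrtg, by omega, by omega⟩

/-- If both halves carry at least `3^d` pebbles, the whole cube can be covered. -/
lemma coverBoth {d : ℕ}
    (ih : ∀ B : (Fin d → Bool) → ℕ, 3^d ≤ ∑ x, B x → Coverable (cube d) B)
    (C : (Fin (d+1) → Bool) → ℕ)
    (hA : 3^d ≤ ∑ y, C (Fin.cons false y)) (hB : 3^d ≤ ∑ y, C (Fin.cons true y)) :
    Coverable (cube (d+1)) C := by
  obtain ⟨CA', hA1, hA2⟩ := ih (fun y => C (Fin.cons false y)) hA
  have l1 := lift_rtg false hA1 C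
  set C1 : (Fin (d+1) → Bool) → ℕ :=
    fun w => if w 0 = false then CA' (Fin.tail w) else C w with hC1
  have start1 : (fun w : Fin (d+1) → Bool =>
      if w 0 = false then (fun y => C (Fin.cons false y)) (Fin.tail w) else C w) = C := by
    funext w
    by_cases hw : w 0 = false
    · simp only [hw, if_pos rfl]
      rw [← hw, Fin.cons_self_tail]
      simp
    · simp [hw]
  rw [start1] at l1
  have hB1 : ∀ y : Fin d → Bool, C1 (Fin.cons true y) = C (Fin.cons true y) := by
    intro y; simp [hC1]
  obtain ⟨CB', hB1', hB2⟩ := ih (fun y => C1 (Fin.cons true y)) (by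
    refine le_trans hB (le_of_eq ?_)
    exact (Finset.sum_congr rfl fun y _ => (hB1 y).symm))
  have l2 := lift_rtg true hB1' C1
  have start2 : (fun w : Fin (d+1) → Bool =>
      if w 0 = true then (fun y => C1 (Fin.cons true y)) (Fin.tail w) else C1 w) = C1 := by
    funext w
    by_cases hw : w 0 = true
    · simp only [hw, if_pos rfl]
      rw [← hw, Fin.cons_self_tail]
      simp
    · simp [hw]
  rw [start2] at l2
  refine ⟨_, l1.trans l2, ?_⟩
  intro v
  by_cases hv : v 0 = true
  · simpa [hv] using hB2 (Fin.tail v)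
  · have hv' : v 0 = false := by
      cases h : v 0
      · rfl
      · exact absurd h hv
    simpa [hC1, hv'] using hA2 (Fin.tail v)

/-- Main covering lemma: any configuration of size at least `3^d` covers `Q^d`. -/
lemma coverOf : ∀ (d : ℕ) (C : (Fin d → Bool) → ℕ),
    3^d ≤ ∑ x, C x → Coverable (cube d) C := by
  intro d
  induction d with
  | zero =>
    intro C hC
    refine ⟨C, Relation.ReflTransGen.refl, ?_⟩
    intro v
    rw [pow_zero, Fintype.sum_unique] at hC
    have hv : v = default := Subsingleton.elim _ _
    rw [hv]
    exact hC.trans (le_of_eq (congrArg C (Subsingleton.elim _ _)))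
  | succ d ih =>
    intro C hC
    rw [sum_split C] at hC
    have h33 : (3:ℕ)^(d+1) = 3 * 3^d := by ring
    have h23 : (2:ℕ)^d ≤ 3^d := Nat.pow_le_pow_left (by norm_num) d
    have hpow : 1 ≤ (2:ℕ)^d := Nat.one_le_two_pow
    by_cases hSB : 3^d ≤ ∑ y, C (Fin.cons true y)
    · by_cases hSA : 3^d ≤ ∑ y, C (Fin.cons false y)
      · exact coverBoth ih C hSA hSB
      · -- move pebbles from the `true` side to the `false` side
        push_neg at hSA
        obtain ⟨C', hrtg, hb2, hnb2⟩ :=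
          moveLemma true (3^d - ∑ y, C (Fin.cons false y)) C (by omega)
        simp only [Bool.not_true] at hnb2
        obtain ⟨C'', hrtg', hcov⟩ := coverBoth ih C' (by omega) (by omega)
        exact ⟨C'', hrtg.trans hrtg', hcov⟩
    · -- move pebbles from the `false` side to the `true` side
      push_neg at hSB
      obtain ⟨C', hrtg, hb2, hnb2⟩ :=
        moveLemma false (3^d - ∑ y, C (Fin.cons true y)) C (by omega)
      simp only [Bool.not_false] at hnb2
      obtain ⟨C'', hrtg', hcov⟩ := coverBoth ih C' (by omega) (by omega)
      exact ⟨C'', hrtg.trans hrtg', hcov⟩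

/-! ### Weight function for the lower bound -/

/-- weight of a vertex relative to the all-false target -/
def wt (d : ℕ) (x : Fin d → Bool) : ℕ := 2 ^ (d - hammingDist x (fun _ => false))

def Wt (d : ℕ) (C : (Fin d → Bool) → ℕ) : ℕ := ∑ x, C x * wt d x

lemma wt_adj {d : ℕ} {u v : Fin d → Bool} (h : (cube d).Adj u v) : wt d v ≤ 2 * wt d u := by
  have htri : hammingDist u (fun _ => false) ≤
      hammingDist u v + hammingDist v (fun _ => false) := hammingDist_triangle _ _ _
  have h1 : hammingDist u v = 1 := h
  unfold wt
  rw [← pow_succ']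
  exact Nat.pow_le_pow_right (by norm_num) (by omega)

lemma Wt_step {d : ℕ} {C C' : (Fin d → Bool) → ℕ} (h : PebbleStep (cube d) C C') :
    Wt d C' ≤ Wt d C := by
  obtain ⟨u, v, hadj, h2, hu, hv, hx⟩ := h
  have hne : u ≠ v := hadj.ne
  have key : ∀ B : (Fin d → Bool) → ℕ,
      ∑ x, B x * wt d x = B u * wt d u + (B v * wt d v +
        ∑ x ∈ (Finset.univ.erase u).erase v, B x * wt d x) := by
    intro B
    rw [← Finset.add_sum_erase _ (fun x => B x * wt d x) (Finset.mem_univ u),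
      ← Finset.add_sum_erase _ (fun x => B x * wt d x)
        (Finset.mem_erase.mpr ⟨hne.symm, Finset.mem_univ v⟩)]
  unfold Wt
  rw [key C, key C']
  have heq : ∑ x ∈ (Finset.univ.erase u).erase v, C' x * wt d x
      = ∑ x ∈ (Finset.univ.erase u).erase v, C x * wt d x := by
    refine Finset.sum_congr rfl fun x hx' => ?_
    rw [Finset.mem_erase, Finset.mem_erase] at hx'
    rw [hx x hx'.2.1 hx'.1]
  rw [heq, hu, hv]
  have hwv : wt d v ≤ 2 * wt d u := wt_adj hadj
  have expand : C u * wt d u = (C u - 2) * wt d u + 2 * wt d u := by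
    rw [← Nat.add_mul]; congr 1; omega
  have : (C v + 1) * wt d v = C v * wt d v + wt d v := by ring
  omega

lemma Wt_rtg {d : ℕ} {C C' : (Fin d → Bool) → ℕ}
    (h : Relation.ReflTransGen (PebbleStep (cube d)) C C') : Wt d C' ≤ Wt d C := by
  induction h with
  | refl => exact le_refl _
  | tail _ hstep ih => exact le_trans (Wt_step hstep) ih

lemma sum_wt (d : ℕ) : ∑ x : Fin d → Bool, wt d x = 3 ^ d := by
  induction d with
  | zero => simp [wt]
  | succ d ih =>
    rw [sum_split (wt (d+1))]
    have hfalse : (fun _ : Fin (d+1) => false) = Fin.cons false (fun _ => false) := by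
      funext i
      refine Fin.cases ?_ ?_ i <;> simp
    have h1 : ∀ y : Fin d → Bool, wt (d+1) (Fin.cons false y) = 2 * wt d y := by
      intro y
      unfold wt
      rw [hfalse, hammingDist_cons, if_pos rfl, Nat.zero_add]
      have : hammingDist y (fun _ => false) ≤ d := hammingDist_le_card_fintype.trans (by simp)
      rw [← pow_succ']
      congr 1
      omega
    have h2 : ∀ y : Fin d → Bool, wt (d+1) (Fin.cons true y) = wt d y := by
      intro y
      unfold wt
      rw [hfalse, hammingDist_cons, if_neg (by simp)]
      have : hammingDist y (fun _ => false) ≤ d := hammingDist_le_card_fintype.trans (by simp)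
      congr 1
      omega
    rw [Finset.sum_congr rfl fun y _ => h1 y, Finset.sum_congr rfl fun y _ => h2 y,
      ← Finset.mul_sum, ih]
    ring

/-- The cover pebbling number of the `d`-dimensional hypercube equals `3^d`,
for every positive integer `d`: `3^d` is the least `m` such that every
configuration of size `m` on `Q^d` is coverable. -/
theorem cover_pebbling_number_cube (d : ℕ) (hd : 0 < d) :
    IsLeast {m : ℕ | ∀ C : (Fin d → Bool) → ℕ, (∑ v, C v) = m → Coverable (cube d) C}
      (3 ^ d) := by
  constructor
  · intro C hC
    exact coverOf d C (le_of_eq hC.symm)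
  · intro m hm
    set T : Fin d → Bool := fun _ => true with hT
    set C0 : (Fin d → Bool) → ℕ := fun x => if x = T then m else 0 with hC0
    have hsum : ∑ v, C0 v = m := by simp [hC0]
    obtain ⟨C', hrtg, hcov⟩ := hm C0 hsum
    have h1 : ∑ x : Fin d → Bool, wt d x ≤ Wt d C' := by
      unfold Wt
      refine Finset.sum_le_sum fun x _ => ?_
      calc wt d x = 1 * wt d x := (one_mul _).symm
        _ ≤ C' x * wt d x := Nat.mul_le_mul_right _ (hcov x)
    have h2 : Wt d C' ≤ Wt d C0 := Wt_rtg hrtg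
    have hwT : wt d T = 1 := by
      have hdist : hammingDist T (fun _ => false) = d := by
        simp [hammingDist, hT]
      simp [wt, hdist]
    have h3 : Wt d C0 = m := by
      unfold Wt
      rw [Finset.sum_congr rfl (fun x _ => by rw [hC0, ite_mul, zero_mul])]
      rw [Finset.sum_ite_eq' Finset.univ T (fun x => m * wt d x)]
      simp [hwT]
    rw [sum_wt] at h1
    omega
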